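/- Let M_u > 0, f_M > 0, K̂ ∈ ℝⁿ, X ∈ ℝⁿ, l̂ > 0 with M_u ≥ |K̂ᵀX| − l̂f_M, and let f ∈ ℝ with |f| ≤ f_M. Define u = K̂ᵀX + l̂f and g = 0 if |u| < M_u, g = (M_u − u)/l̂ if u ≥ M_u, g = (−M_u − u)/l̂ if u ≤ −M_u. Then |f + g| ≤ f_M. -/
import Mathlib

open Matrix

theorem stmt_10 {n : ℕ} (Mu fM : ℝ) (hMu : 0 < Mu) (hfM : 0 < fM)
    (Khat X : Fin n → ℝ) (lhat f : ℝ) (hl : 0 < lhat)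
    (hstab : |Khat ⬝ᵥ X| - lhat * fM ≤ Mu) (hf : |f| ≤ fM)
    (u g : ℝ) (hu : u = Khat ⬝ᵥ X + lhat * f)
    (hg : g = if |u| < Mu then 0
      else if Mu ≤ u then (Mu - u) / lhat else (-Mu - u) / lhat) :
    |f + g| ≤ fM := by
  have hK1 : Khat ⬝ᵥ X ≤ |Khat ⬝ᵥ X| := le_abs_self _
  have hK2 : -(Khat ⬝ᵥ X) ≤ |Khat ⬝ᵥ X| := neg_le_abs _
  have hf1 := abs_le.mp hf
  rw [abs_le]
  subst hg hu
  have hl' := ne_of_gt hl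
  split_ifs with h1 h2
  · constructor <;> simp <;> linarith [hf1.1, hf1.2]
  · have key : f + (Mu - (Khat ⬝ᵥ X + lhat * f)) / lhat
        = (Mu - Khat ⬝ᵥ X) / lhat := by field_simp; ring
    rw [key, le_div_iff₀ hl, div_le_iff₀ hl]
    constructor <;> nlinarith
  · push_neg at h1 h2
    have h3 : Mu ≤ -(Khat ⬝ᵥ X + lhat * f) :=
      (le_abs.mp h1).resolve_left (not_le.mpr h2)
    have key : f + (-Mu - (Khat ⬝ᵥ X + lhat * f)) / lhat
        = (-Mu - Khat ⬝ᵥ X) / lhat := by field_simp; ring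
    rw [key, le_div_iff₀ hl, div_le_iff₀ hl]
    constructor <;> nlinarith
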